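/- arXiv:1904.00556 — 2 statements merged into one kernel-verified Lean document; each statement's English description precedes it below -/
import Mathlib

section
/- For each i = 1, 2, 3, the element x_i·f lies in 𝔭². -/
open MvPolynomial

noncomputable def curveMap (k : Type*) [Field k] (q m : ℕ) :
    MvPolynomial (Fin 4) k →ₐ[k] MvPolynomial (Fin 2) k :=
  aeval ![X 0 ^ (2*q+1+2*m), X 0 ^ (2*q+1+m) * X 1 ^ m, X 0 ^ (2*q+1) * X 1 ^ (2*m),
    X 1 ^ (2*q+1+2*m)]

noncomputable def curveIdeal (k : Type*) [Field k] (q m : ℕ) : Ideal (MvPolynomial (Fin 4) k) :=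
  RingHom.ker (curveMap k q m)

instance (k : Type*) [Field k] (q m : ℕ) : (curveIdeal k q m).IsPrime :=
  RingHom.ker_isPrime _

noncomputable def symbPow (k : Type*) [Field k] (q m n : ℕ) :
    Ideal (MvPolynomial (Fin 4) k) :=
  (Ideal.map (algebraMap _ (Localization.AtPrime (curveIdeal k q m)))
      ((curveIdeal k q m) ^ n)).comap
    (algebraMap _ (Localization.AtPrime (curveIdeal k q m)))

noncomputable def fPoly (k : Type*) [Field k] (q m : ℕ) : MvPolynomial (Fin 4) k :=
  - X 2 ^ (2*(q+m)+1) - X 0 ^ (q-1) * X 1 ^ 3 * X 2 ^ (q+m-1) * X 3 ^ m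
    + 3 * X 0 ^ q * X 1 * X 2 ^ (q+m) * X 3 ^ m - X 0 ^ (2*q+1) * X 3 ^ (2*m)

noncomputable def moduleLength (R M : Type*) [Ring R] [AddCommGroup M] [Module R M] :
    WithBot ℕ∞ :=
  Order.krullDim (Submodule R M)

lemma A_mem (k : Type*) [Field k] (q m : ℕ) :
    (X 0 * X 2 - X 1 ^ 2 : MvPolynomial (Fin 4) k) ∈ curveIdeal k q m := by
  simp only [curveIdeal, RingHom.mem_ker, AlgHom.coe_toRingHom, curveMap, map_sub, map_mul,
    map_pow, aeval_X, Matrix.cons_val_zero, Matrix.cons_val_one, Matrix.head_cons,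
    Matrix.cons_val_two, Matrix.tail_cons]
  ring

lemma B_mem (k : Type*) [Field k] (q m : ℕ) :
    (X 0 ^ q * X 1 * X 3 ^ m - X 2 ^ (q + m + 1) : MvPolynomial (Fin 4) k) ∈
      curveIdeal k q m := by
  simp only [curveIdeal, RingHom.mem_ker, AlgHom.coe_toRingHom, curveMap, map_sub, map_mul,
    map_pow, aeval_X, Matrix.cons_val_zero, Matrix.cons_val_one, Matrix.head_cons,
    Matrix.cons_val_two, Matrix.tail_cons, Matrix.cons_val_three]
  ring_nf

lemma C_mem (k : Type*) [Field k] (q m : ℕ) :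
    (X 0 ^ (q + 1) * X 3 ^ m - X 1 * X 2 ^ (q + m) : MvPolynomial (Fin 4) k) ∈
      curveIdeal k q m := by
  simp only [curveIdeal, RingHom.mem_ker, AlgHom.coe_toRingHom, curveMap, map_sub, map_mul,
    map_pow, aeval_X, Matrix.cons_val_zero, Matrix.cons_val_one, Matrix.head_cons,
    Matrix.cons_val_two, Matrix.tail_cons, Matrix.cons_val_three]
  ring_nf

/-- For each `i = 1, 2, 3`, the element `xᵢ·f` lies in `𝔭²`. -/
theorem statement2 (k : Type*) [Field k] (q m : ℕ) (hq : 1 ≤ q) (hm : 1 ≤ m)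
    (hco : Nat.Coprime (2*q+1) m) :
    (X 0 : MvPolynomial (Fin 4) k) * fPoly k q m ∈ (curveIdeal k q m) ^ 2 ∧
    (X 1 : MvPolynomial (Fin 4) k) * fPoly k q m ∈ (curveIdeal k q m) ^ 2 ∧
    (X 2 : MvPolynomial (Fin 4) k) * fPoly k q m ∈ (curveIdeal k q m) ^ 2 := by
  obtain ⟨q, rfl⟩ : ∃ q', q = q' + 1 := ⟨q - 1, by omega⟩
  obtain ⟨m, rfl⟩ : ∃ m', m = m' + 1 := ⟨m - 1, by omega⟩
  have hsub : q + 1 + (m + 1) - 1 = q + m + 1 := by omega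
  have hsub' : q + 1 - 1 = q := by omega
  set A : MvPolynomial (Fin 4) k := X 0 * X 2 - X 1 ^ 2 with hA
  set B : MvPolynomial (Fin 4) k :=
    X 0 ^ (q + 1) * X 1 * X 3 ^ (m + 1) - X 2 ^ (q + 1 + (m + 1) + 1) with hB
  set C : MvPolynomial (Fin 4) k :=
    X 0 ^ (q + 1 + 1) * X 3 ^ (m + 1) - X 1 * X 2 ^ (q + 1 + (m + 1)) with hC
  have hAm := A_mem k (q + 1) (m + 1)
  have hBm := B_mem k (q + 1) (m + 1)
  have hCm := C_mem k (q + 1) (m + 1)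
  rw [← hA] at hAm
  rw [← hB] at hBm
  rw [← hC] at hCm
  rw [pow_two]
  refine ⟨?_, ?_, ?_⟩
  · have key : (X 0 : MvPolynomial (Fin 4) k) * fPoly k (q + 1) (m + 1) =
        X 2 ^ (q + m + 1) * (A * B) - C * C := by
      simp only [fPoly, hsub, hsub', hA, hB, hC]
      ring
    rw [key]
    exact Ideal.sub_mem _ (Ideal.mul_mem_left _ _ (Ideal.mul_mem_mul hAm hBm))
      (Ideal.mul_mem_mul hCm hCm)
  · have key : (X 1 : MvPolynomial (Fin 4) k) * fPoly k (q + 1) (m + 1) =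
        - (B * C) - X 0 ^ q * X 2 ^ (q + m + 1) * X 3 ^ (m + 1) * (A * A) := by
      simp only [fPoly, hsub, hsub', hA, hB, hC]
      ring
    rw [key]
    exact Ideal.sub_mem _ (neg_mem (Ideal.mul_mem_mul hBm hCm))
      (Ideal.mul_mem_left _ _ (Ideal.mul_mem_mul hAm hAm))
  · have key : (X 2 : MvPolynomial (Fin 4) k) * fPoly k (q + 1) (m + 1) =
        - (X 0 ^ q * X 3 ^ (m + 1) * (A * C)) - B * B := by
      simp only [fPoly, hsub, hsub', hA, hB, hC]
      ring
    rw [key]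
    exact Ideal.sub_mem _ (neg_mem (Ideal.mul_mem_left _ _ (Ideal.mul_mem_mul hAm hCm)))
      (Ideal.mul_mem_mul hBm hBm)
end

section
/- For all n ≥ 1: (1) 𝓘ₙ ⊆ 𝔭^{(n)}, and (2) the radical of the ideal 𝓘ₙ + (x₁,x₄) is the maximal graded ideal 𝔪 = (x₁,x₂,x₃,x₄), i.e., 𝓘ₙ + (x₁,x₄) is 𝔪-primary. -/
open MvPolynomial

/-- `𝓘ₙ = Σ_{n₁+2n₂=n} (f)^{n₂}·𝔭^{n₁}`. -/
noncomputable def scriptI (k : Type*) [Field k] (q m n : ℕ) :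
    Ideal (MvPolynomial (Fin 4) k) :=
  ⨆ (c : ℕ × ℕ) (_ : c.1 + 2 * c.2 = n),
    (Ideal.span {fPoly k q m}) ^ c.2 * (curveIdeal k q m) ^ c.1

/- ### Auxiliary lemmas -/

private lemma aux_pow_sub {R : Type*} [CommRing R] (I : Ideal R) {b : R} (hb : b ∈ I)
    (a : R) (n : ℕ) : (a + b) ^ n - a ^ n ∈ I := by
  have h : Ideal.Quotient.mk I ((a + b) ^ n) = Ideal.Quotient.mk I (a ^ n) := by
    rw [map_pow, map_pow, map_add, Ideal.Quotient.eq_zero_iff_mem.mpr hb, add_zero]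
  exact Ideal.Quotient.eq.mp h

private lemma aux_set_eq (k : Type*) [Field k] :
    ({X 0, X 1, X 2, X 3} : Set (MvPolynomial (Fin 4) k)) = X '' Set.univ := by
  ext y
  simp only [Set.image_univ, Set.mem_range, Set.mem_insert_iff, Set.mem_singleton_iff]
  constructor
  · rintro (rfl | rfl | rfl | rfl) <;> exact ⟨_, rfl⟩
  · rintro ⟨i, rfl⟩; fin_cases i <;> simp

/-- For all `n ≥ 1`: (1) `𝓘ₙ ⊆ 𝔭⁽ⁿ⁾`, and (2) the radical of
`𝓘ₙ + (x₁,x₄)` is the maximal graded ideal `𝔪 = (x₁,x₂,x₃,x₄)`, i.e. `𝓘ₙ + (x₁,x₄)` is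
`𝔪`-primary. -/
theorem statement8 (k : Type*) [Field k] (q m : ℕ) (hq : 1 ≤ q) (hm : 1 ≤ m)
    (hco : Nat.Coprime (2*q+1) m) :
    ∀ n : ℕ, 1 ≤ n →
      scriptI k q m n ≤ symbPow k q m n ∧
      (scriptI k q m n ⊔ Ideal.span {(X 0 : MvPolynomial (Fin 4) k), X 3}).radical
        = Ideal.span {(X 0 : MvPolynomial (Fin 4) k), X 1, X 2, X 3} := by
  obtain ⟨p, rfl⟩ : ∃ p, q = p + 1 := ⟨q - 1, by omega⟩
  set P : Ideal (MvPolynomial (Fin 4) k) := curveIdeal k (p+1) m with hPdef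
  have hfP : fPoly k (p+1) m =
      - X 2 ^ (2*(p+1+m)+1) - X 0 ^ p * X 1 ^ 3 * X 2 ^ (p+m) * X 3 ^ m
        + 3 * X 0 ^ (p+1) * X 1 * X 2 ^ (p+1+m) * X 3 ^ m
        - X 0 ^ (2*(p+1)+1) * X 3 ^ (2*m) := by
    simp only [fPoly]
    rw [show p + 1 - 1 = p by omega, show p + 1 + m - 1 = p + m by omega]
  -- the three auxiliary elements of 𝔭
  have hA : (X 1 ^ 2 - X 0 * X 2 : MvPolynomial (Fin 4) k) ∈ P := by
    rw [hPdef, curveIdeal, RingHom.mem_ker]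
    simp [curveMap]; ring
  have hB : (X 1 * X 2 ^ (p+1+m) - X 0 ^ (p+2) * X 3 ^ m : MvPolynomial (Fin 4) k) ∈ P := by
    rw [hPdef, curveIdeal, RingHom.mem_ker]
    simp [curveMap]; ring
  have hC : (X 2 ^ (2*(p+1+m)) - X 0 ^ (p+1) * X 1 * X 2 ^ (p+m) * X 3 ^ m :
      MvPolynomial (Fin 4) k) ∈ P := by
    rw [hPdef, curveIdeal, RingHom.mem_ker]
    simp [curveMap]; ring
  have hkey : (X 0 : MvPolynomial (Fin 4) k) * fPoly k (p+1) m =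
      (X 1 ^ 2 - X 0 * X 2) * (X 2 ^ (2*(p+1+m)) - X 0 ^ (p+1) * X 1 * X 2 ^ (p+m) * X 3 ^ m)
        - (X 1 * X 2 ^ (p+1+m) - X 0 ^ (p+2) * X 3 ^ m) ^ 2 := by
    rw [hfP]; ring
  have hfp2 : (X 0 : MvPolynomial (Fin 4) k) * fPoly k (p+1) m ∈ P ^ 2 := by
    rw [hkey]
    refine Ideal.sub_mem _ ?_ ?_
    · rw [pow_two]; exact Ideal.mul_mem_mul hA hC
    · rw [pow_two, pow_two]; exact Ideal.mul_mem_mul hB hB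
  have hx0 : (X 0 : MvPolynomial (Fin 4) k) ∉ P := by
    rw [hPdef, curveIdeal, RingHom.mem_ker]
    simp [curveMap]
  have hPprime : P.IsPrime := inferInstance
  have hf : fPoly k (p+1) m ∈ P := by
    have := Ideal.pow_le_self (two_ne_zero) hfp2
    exact (hPprime.mem_or_mem this).resolve_left hx0
  -- 𝔭ⁿ ≤ 𝓘ₙ
  have hPn_le : ∀ n : ℕ, P ^ n ≤ scriptI k (p+1) m n := by
    intro n
    have h := le_iSup₂ (f := fun (c : ℕ × ℕ) (_ : c.1 + 2 * c.2 = n) =>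
      (Ideal.span {fPoly k (p+1) m}) ^ c.2 * (curveIdeal k (p+1) m) ^ c.1) (n, 0) (by simp)
    simpa [scriptI] using h
  -- 𝓘ₙ ≤ 𝔭 for n ≥ 1
  have hI_le_P : ∀ n : ℕ, 1 ≤ n → scriptI k (p+1) m n ≤ P := by
    intro n hn
    simp only [scriptI]
    apply iSup₂_le
    rintro ⟨c1, c2⟩ hc
    simp only at hc
    rcases Nat.eq_zero_or_pos c1 with h1 | h1
    · have h2 : c2 ≠ 0 := by omega
      refine le_trans Ideal.mul_le_left ?_
      refine le_trans (Ideal.pow_le_self h2) ?_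
      rw [Ideal.span_le, Set.singleton_subset_iff]
      exact hf
    · exact le_trans Ideal.mul_le_right (Ideal.pow_le_self (by omega))
  -- constant coefficients
  have hMker : ∀ g : MvPolynomial (Fin 4) k, aeval (0 : Fin 4 → k) g = 0 →
      g ∈ Ideal.span ({X 0, X 1, X 2, X 3} : Set (MvPolynomial (Fin 4) k)) := by
    intro g hg
    rw [aux_set_eq, mem_ideal_span_X_image]
    intro mo hmo
    by_contra hcon
    push_neg at hcon
    have hmo0 : mo = 0 := Finsupp.ext fun i => hcon i (Set.mem_univ i)
    have hc0 : constantCoeff g = 0 := by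
      simpa [aeval_zero] using hg
    rw [constantCoeff_eq] at hc0
    rw [mem_support_iff, hmo0] at hmo
    exact hmo hc0
  have hPM : P ≤ Ideal.span ({X 0, X 1, X 2, X 3} : Set (MvPolynomial (Fin 4) k)) := by
    intro g hg
    apply hMker
    have hcomp : (aeval (0 : Fin 2 → k)).comp (curveMap k (p+1) m)
        = aeval (0 : Fin 4 → k) := by
      apply MvPolynomial.algHom_ext
      intro i
      fin_cases i <;> simp [curveMap]
    have hg0 : curveMap k (p+1) m g = 0 := by rwa [hPdef, curveIdeal, RingHom.mem_ker] at hg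
    calc aeval (0 : Fin 4 → k) g
        = (aeval (0 : Fin 2 → k)).comp (curveMap k (p+1) m) g := by rw [hcomp]
      _ = aeval (0 : Fin 2 → k) (curveMap k (p+1) m g) := rfl
      _ = 0 := by rw [hg0, map_zero]
  have hMprime : (Ideal.span ({X 0, X 1, X 2, X 3} :
      Set (MvPolynomial (Fin 4) k))).IsPrime := by
    have heq : Ideal.span ({X 0, X 1, X 2, X 3} : Set (MvPolynomial (Fin 4) k))
        = RingHom.ker (aeval (0 : Fin 4 → k) : MvPolynomial (Fin 4) k →ₐ[k] k) := by
      apply le_antisymm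
      · rw [Ideal.span_le]
        rintro y (rfl | rfl | rfl | rfl) <;> simp [RingHom.mem_ker]
      · intro g hg
        exact hMker g (by rwa [RingHom.mem_ker] at hg)
    rw [heq]
    exact RingHom.ker_isPrime _
  intro n hn
  constructor
  · -- Part 1
    simp only [scriptI]
    apply iSup₂_le
    rintro ⟨c1, c2⟩ hc
    simp only at hc
    rw [symbPow, ← Ideal.map_le_iff_le_comap]
    set S := Localization.AtPrime (curveIdeal k (p+1) m)
    set Q : Ideal S := Ideal.map (algebraMap _ S) P with hQdef
    have hfQ : Ideal.map (algebraMap _ S) (Ideal.span {fPoly k (p+1) m}) ≤ Q ^ 2 := by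
      rw [Ideal.map_le_iff_le_comap, Ideal.span_le, Set.singleton_subset_iff]
      have hxunit : IsUnit (algebraMap (MvPolynomial (Fin 4) k) S (X 0)) :=
        IsLocalization.map_units S (⟨X 0, hx0⟩ : P.primeCompl)
      obtain ⟨u, hu⟩ := hxunit
      have hxf : algebraMap _ S (X 0 * fPoly k (p+1) m) ∈ Q ^ 2 := by
        rw [hQdef, ← Ideal.map_pow]
        exact Ideal.mem_map_of_mem _ hfp2
      have heq : algebraMap (MvPolynomial (Fin 4) k) S (fPoly k (p+1) m)
          = ↑u⁻¹ * algebraMap _ S (X 0 * fPoly k (p+1) m) := by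
        rw [map_mul, ← hu, ← mul_assoc, Units.inv_mul, one_mul]
      show algebraMap _ S (fPoly k (p+1) m) ∈ Q ^ 2
      rw [heq]
      exact Ideal.mul_mem_left _ _ hxf
    calc Ideal.map (algebraMap _ S) ((Ideal.span {fPoly k (p+1) m}) ^ c2 * P ^ c1)
        = (Ideal.map (algebraMap _ S) (Ideal.span {fPoly k (p+1) m})) ^ c2 * Q ^ c1 := by
          rw [Ideal.map_mul, Ideal.map_pow, Ideal.map_pow]
      _ ≤ (Q ^ 2) ^ c2 * Q ^ c1 :=
          Ideal.mul_mono (Ideal.pow_right_mono hfQ c2) le_rfl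
      _ = Q ^ (2 * c2 + c1) := by rw [← pow_mul, ← pow_add]
      _ = Q ^ n := by rw [show 2 * c2 + c1 = n by omega]
      _ = Ideal.map (algebraMap _ S) (P ^ n) := (Ideal.map_pow _ _ _).symm
  · -- Part 2
    set L : Ideal (MvPolynomial (Fin 4) k) := Ideal.span {X 0, X 3} with hLdef
    have hX0L : (X 0 : MvPolynomial (Fin 4) k) ∈ L := Ideal.subset_span (by simp)
    have hX3L : (X 3 : MvPolynomial (Fin 4) k) ∈ L := Ideal.subset_span (by simp)
    apply le_antisymm
    · rw [(hMprime.isRadical).radical_le_iff]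
      apply sup_le
      · exact le_trans (hI_le_P n hn) hPM
      · rw [Ideal.span_le]
        rintro y (rfl | rfl) <;> exact Ideal.subset_span (by simp)
    · rw [Ideal.span_le]
      rintro y (rfl | rfl | rfl | rfl)
      · exact Ideal.le_radical (Ideal.mem_sup_right hX0L)
      · -- X 1
        refine Ideal.mem_radical_iff.mpr ⟨2 * n, ?_⟩
        have hb : (X 0 * X 2 : MvPolynomial (Fin 4) k) ∈ L :=
          Ideal.mul_mem_right _ _ hX0L
        have he : (X 1 : MvPolynomial (Fin 4) k) ^ (2 * n)
            = (X 1 ^ 2 - X 0 * X 2) ^ n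
              + (((X 1 ^ 2 - X 0 * X 2) + X 0 * X 2) ^ n - (X 1 ^ 2 - X 0 * X 2) ^ n) := by
          ring
        rw [he]
        exact Ideal.add_mem _
          (Ideal.mem_sup_left (hPn_le n (Ideal.pow_mem_pow hA n)))
          (Ideal.mem_sup_right (aux_pow_sub L hb _ n))
      · -- X 2
        refine Ideal.mem_radical_iff.mpr ⟨2 * (p + 1 + m) * n, ?_⟩
        have hX3m : (X 3 : MvPolynomial (Fin 4) k) ^ m ∈ L := by
          have hme : (X 3 : MvPolynomial (Fin 4) k) ^ m = X 3 ^ (m - 1) * X 3 := by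
            rw [← pow_succ]; congr 1; omega
          rw [hme]; exact Ideal.mul_mem_left _ _ hX3L
        have hb : (X 0 ^ (p+1) * X 1 * X 2 ^ (p+m) * X 3 ^ m : MvPolynomial (Fin 4) k) ∈ L :=
          Ideal.mul_mem_left _ _ hX3m
        have he : (X 2 : MvPolynomial (Fin 4) k) ^ (2 * (p + 1 + m) * n)
            = (X 2 ^ (2*(p+1+m)) - X 0 ^ (p+1) * X 1 * X 2 ^ (p+m) * X 3 ^ m) ^ n
              + (((X 2 ^ (2*(p+1+m)) - X 0 ^ (p+1) * X 1 * X 2 ^ (p+m) * X 3 ^ m)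
                    + X 0 ^ (p+1) * X 1 * X 2 ^ (p+m) * X 3 ^ m) ^ n
                  - (X 2 ^ (2*(p+1+m)) - X 0 ^ (p+1) * X 1 * X 2 ^ (p+m) * X 3 ^ m) ^ n) := by
          ring
        rw [he]
        exact Ideal.add_mem _
          (Ideal.mem_sup_left (hPn_le n (Ideal.pow_mem_pow hC n)))
          (Ideal.mem_sup_right (aux_pow_sub L hb _ n))
      · exact Ideal.le_radical (Ideal.mem_sup_right hX3L)
end
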